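/- Consider two spacecraft with symmetric positive-definite inertia matrices J₁, J₂, whose attitudes and angular velocities satisfy Ṙᵢ = Rᵢ Ω̂ᵢ and Jᵢ Ω̇ᵢ + Ωᵢ × (JᵢΩᵢ) = uᵢ with the feedback controls u₁ = −e₁₂ − k_{Ω₁} e_{Ω₁} + Ω̂^d₁ J₁(e_{Ω₁} + Ω^d₁) + J₁ Ω̇^d₁ and u₂ = −e₂₁ − k_{Ω₂} e_{Ω₂} + Ω̂^d₂ J₂(e_{Ω₂} + Ω^d₂) + J₂ Ω̇^d₂, where k_{Ω₁}, k_{Ω₂} > 0 and e_{Ωᵢ} = Ωᵢ − Ω^dᵢ. Then the function 𝒰 = (1/2) e_{Ω₁}·J₁e_{Ω₁} + (1/2) e_{Ω₂}·J₂e_{Ω₂} + Ψ₁₂ satisfies d𝒰/dt = −k_{Ω₁}‖e_{Ω₁}‖² − k_{Ω₂}‖e_{Ω₂}‖² ≤ 0 along trajectories; in particular 𝒰 is non-increasing. -/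

import Mathlib

noncomputable section
open Matrix

/-- Vectors in ℝ³ with the Euclidean norm. -/
abbrev V3 : Type := EuclideanSpace ℝ (Fin 3)

/-- Real 3×3 matrices. -/
abbrev M3 : Type := Matrix (Fin 3) (Fin 3) ℝ

/-- The special orthogonal group SO(3): RᵀR = I and det R = 1. -/
def SO3 (R : M3) : Prop := Rᵀ * R = 1 ∧ R.det = 1

/-- Action of a matrix on a vector. -/
def matVec (A : M3) (v : V3) : V3 := WithLp.toLp 2 (A.mulVec v)

/-- Cross product on ℝ³. -/
def cross3 (u v : V3) : V3 :=
  WithLp.toLp 2 ![u 1 * v 2 - u 2 * v 1, u 2 * v 0 - u 0 * v 2, u 0 * v 1 - u 1 * v 0]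

/-- The hat map: x̂ y = x × y. -/
def hat (x : V3) : M3 :=
  !![0, -x 2, x 1; x 2, 0, -x 0; -x 1, x 0, 0]

/-- The vee map, inverse of the hat map on skew-symmetric matrices. -/
def vee (A : M3) : V3 := WithLp.toLp 2 ![A 2 1, A 0 2, A 1 0]

/-- Dot product on ℝ³. -/
def dot3 (u v : V3) : ℝ := u 0 * v 0 + u 1 * v 1 + u 2 * v 2

attribute [local instance] Matrix.normedAddCommGroup Matrix.normedSpace

section Helpers

lemma clequiv_hasDerivAt_iff {E F : Type*} [NormedAddCommGroup E] [NormedSpace ℝ E]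
    [NormedAddCommGroup F] [NormedSpace ℝ F] (e : E ≃L[ℝ] F) {f : ℝ → E} {f' : E} {t : ℝ} :
    HasDerivAt f f' t ↔ HasDerivAt (fun s => e (f s)) (e f') t := by
  constructor
  · intro h; exact (e.toContinuousLinearMap.hasFDerivAt.comp_hasDerivAt t h :)
  · intro h
    have := (e.symm.toContinuousLinearMap.hasFDerivAt.comp_hasDerivAt t h :)
    simpa [Function.comp_def] using this

lemma hasDerivAt_V3_iff {f : ℝ → V3} {f' : V3} {t : ℝ} :
    HasDerivAt f f' t ↔ ∀ i, HasDerivAt (fun s => f s i) (f' i) t := by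
  rw [clequiv_hasDerivAt_iff (PiLp.continuousLinearEquiv 2 ℝ (fun _ : Fin 3 => ℝ))]
  exact hasDerivAt_pi

lemma hasDerivAt_M3_iff {f : ℝ → M3} {f' : M3} {t : ℝ} :
    HasDerivAt f f' t ↔ ∀ i j, HasDerivAt (fun s => f s i j) (f' i j) t := by
  exact hasDerivAt_pi.trans (forall_congr' fun i => hasDerivAt_pi)

lemma HasDerivAt.dot3d {f g : ℝ → V3} {f' g' : V3} {t : ℝ}
    (hf : HasDerivAt f f' t) (hg : HasDerivAt g g' t) :
    HasDerivAt (fun s => dot3 (f s) (g s)) (dot3 f' (g t) + dot3 (f t) g') t := by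
  have hf' := hasDerivAt_V3_iff.1 hf
  have hg' := hasDerivAt_V3_iff.1 hg
  have h := ((((hf' 0).mul (hg' 0)).add ((hf' 1).mul (hg' 1))).add ((hf' 2).mul (hg' 2)))
  convert h using 1
  · rfl
  · rfl
  · rfl
  simp [dot3] <;> ring

lemma HasDerivAt.matVec3 {A : ℝ → M3} {v : ℝ → V3} {A' : M3} {v' : V3} {t : ℝ}
    (hA : HasDerivAt A A' t) (hv : HasDerivAt v v' t) :
    HasDerivAt (fun s => matVec (A s) (v s)) (matVec A' (v t) + matVec (A t) v') t := by
  rw [hasDerivAt_V3_iff]; intro i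
  have hA' := hasDerivAt_M3_iff.1 hA
  have hv' := hasDerivAt_V3_iff.1 hv
  have h := ((((hA' i 0).mul (hv' 0)).add ((hA' i 1).mul (hv' 1))).add ((hA' i 2).mul (hv' 2)))
  convert h using 1
  · rfl
  · rfl
  · funext s; simp [matVec, Matrix.mulVec, dotProduct, Fin.sum_univ_three]
  · simp [matVec, Matrix.mulVec, dotProduct, Fin.sum_univ_three, PiLp.add_apply]; ring

lemma HasDerivAt.cross3d {f g : ℝ → V3} {f' g' : V3} {t : ℝ}
    (hf : HasDerivAt f f' t) (hg : HasDerivAt g g' t) :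
    HasDerivAt (fun s => cross3 (f s) (g s)) (cross3 f' (g t) + cross3 (f t) g') t := by
  rw [hasDerivAt_V3_iff]; intro i
  have hf' := hasDerivAt_V3_iff.1 hf
  have hg' := hasDerivAt_V3_iff.1 hg
  fin_cases i
  · convert ((hf' 1).mul (hg' 2)).sub ((hf' 2).mul (hg' 1)) using 1
    · rfl
    · rfl
    · rfl
    simp [cross3, PiLp.add_apply] <;> ring
  · convert ((hf' 2).mul (hg' 0)).sub ((hf' 0).mul (hg' 2)) using 1
    · rfl
    · rfl
    · rfl
    simp [cross3, PiLp.add_apply] <;> ring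
  · convert ((hf' 0).mul (hg' 1)).sub ((hf' 1).mul (hg' 0)) using 1
    · rfl
    · rfl
    · rfl
    simp [cross3, PiLp.add_apply] <;> ring

lemma HasDerivAt.transp3 {A : ℝ → M3} {A' : M3} {t : ℝ} (hA : HasDerivAt A A' t) :
    HasDerivAt (fun s => (A s)ᵀ) A'ᵀ t := by
  rw [hasDerivAt_M3_iff]; intro i j
  exact hasDerivAt_M3_iff.1 hA j i

lemma dot3_comm (u v : V3) : dot3 u v = dot3 v u := by simp [dot3]; ring

lemma dot3_matVec_left (M : M3) (u v : V3) : dot3 (matVec M u) v = dot3 u (matVec Mᵀ v) := by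
  simp [dot3, matVec, Matrix.mulVec, Matrix.vecMul, dotProduct, Matrix.transpose_apply,
    Fin.sum_univ_three]
  ring

lemma dot3_self_norm (x : V3) : dot3 x x = ‖x‖ ^ 2 := by
  rw [EuclideanSpace.norm_eq, Real.sq_sqrt (by positivity)]
  simp [dot3, Fin.sum_univ_three, Real.norm_eq_abs, sq_abs]; ring

lemma cross_deriv_id (a b x : V3) :
    cross3 (cross3 a x) b + cross3 a (cross3 b x) = cross3 (cross3 a b) x := by
  ext i; fin_cases i <;> simp [cross3, PiLp.add_apply] <;> ring

lemma matVec_hatT (M : M3) (x v : V3) : matVec ((M * hat x)ᵀ) v = cross3 (matVec Mᵀ v) x := by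
  ext i; fin_cases i <;>
    simp [matVec, cross3, hat, Matrix.mulVec, Matrix.mul_apply, dotProduct,
      Fin.sum_univ_three] <;> ring

lemma matVec_matVec (M N : M3) (v : V3) : matVec M (matVec N v) = matVec (M * N) v := by
  simp [matVec, Matrix.mulVec_mulVec]

lemma matVec_one (v : V3) : matVec 1 v = v := by simp [matVec]

lemma matVec_sub (M : M3) (u v : V3) : matVec M (u - v) = matVec M u - matVec M v := by
  ext i; fin_cases i <;>
    simp [matVec, Matrix.mulVec, dotProduct, Fin.sum_univ_three, PiLp.sub_apply] <;> ring

lemma det_cross_id (M : M3) (u v : V3) :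
    matVec M (cross3 (matVec Mᵀ u) (matVec Mᵀ v)) = M.det • cross3 u v := by
  ext i; fin_cases i <;>
    simp [matVec, cross3, Matrix.mulVec, Matrix.vecMul, dotProduct, Matrix.det_fin_three,
      Matrix.transpose_apply, Fin.sum_univ_three, PiLp.smul_apply, smul_eq_mul] <;> ring

lemma cross3_SO3 (R : M3) (hR : SO3 R) (u v : V3) :
    cross3 (matVec Rᵀ u) (matVec Rᵀ v) = matVec Rᵀ (cross3 u v) := by
  have hRT : ∀ x : V3, matVec Rᵀ (matVec R x) = x := fun x => by
    rw [matVec_matVec, hR.1, matVec_one]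
  calc cross3 (matVec Rᵀ u) (matVec Rᵀ v)
      = matVec Rᵀ (matVec R (cross3 (matVec Rᵀ u) (matVec Rᵀ v))) := (hRT _).symm
    _ = matVec Rᵀ (R.det • cross3 u v) := by rw [det_cross_id]
    _ = matVec Rᵀ (cross3 u v) := by rw [hR.2, one_smul]

lemma norm_matVec_SO3T (R : M3) (hR : SO3 R) (x : V3) : ‖matVec Rᵀ x‖ = ‖x‖ := by
  have h2 : R * Rᵀ = 1 := mul_eq_one_comm.mp hR.1
  have hd : dot3 (matVec Rᵀ x) (matVec Rᵀ x) = dot3 x x := by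
    rw [dot3_matVec_left, Matrix.transpose_transpose, matVec_matVec, h2, matVec_one]
  rw [dot3_self_norm, dot3_self_norm] at hd
  rw [← Real.sqrt_sq (norm_nonneg (matVec Rᵀ x)), hd, Real.sqrt_sq (norm_nonneg x)]

lemma symJ (J : M3) (hJ : J.IsSymm) (u v : V3) :
    dot3 u (matVec J v) = dot3 v (matVec J u) := by
  rw [dot3_comm, dot3_matVec_left, hJ.eq]

lemma kin_id (w wd wd' e : V3) (J : M3) (k : ℝ) :
    dot3 (w - wd) (-e - k • (w - wd) + matVec (hat wd) (matVec J (w - wd + wd)) + matVec J wd'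
      - cross3 w (matVec J w) - matVec J wd')
    = -dot3 (w - wd) e - k * dot3 (w - wd) (w - wd) := by
  simp [dot3, cross3, matVec, hat, Matrix.mulVec, Matrix.vecMul, dotProduct, Fin.sum_univ_three,
    PiLp.add_apply, PiLp.sub_apply, PiLp.smul_apply, PiLp.neg_apply, smul_eq_mul]
  ring

lemma psi_id (p q P Pv : V3) (Q : M3) (w₁ w₂ wd₁ wd₂ : V3) (ka kb ai : ℝ) :
    ka * (0 + (dot3 (cross3 q w₂) (matVec Q p)
        + dot3 q (matVec (Q * hat wd₁ - hat wd₂ * Q) p + matVec Q (cross3 p w₁))))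
    + kb * (0 + ai * (dot3 (cross3 Pv w₂) (matVec Q P)
        + dot3 Pv (matVec (Q * hat wd₁ - hat wd₂ * Q) P + matVec Q (cross3 P w₁))))
    = dot3 (w₁ - wd₁) (ka • cross3 (matVec Qᵀ q) p + (kb * ai) • cross3 (matVec Qᵀ Pv) P)
    + dot3 (w₂ - wd₂) (ka • cross3 (matVec Q p) q + (kb * ai) • cross3 (matVec Q P) Pv) := by
  simp [dot3, cross3, matVec, hat, Matrix.mulVec, Matrix.vecMul, Matrix.mul_apply,
    Matrix.transpose_apply, dotProduct, Fin.sum_univ_three,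
    PiLp.add_apply, PiLp.sub_apply, PiLp.smul_apply, PiLp.neg_apply, smul_eq_mul]
  ring

lemma deriv_bvec {R : ℝ → M3} {Ω : ℝ → V3} {t : ℝ}
    (hR : HasDerivAt R (R t * hat (Ω t)) t) (s : V3) :
    HasDerivAt (fun τ => matVec (R τ)ᵀ s) (cross3 (matVec (R t)ᵀ s) (Ω t)) t := by
  have h := hR.transp3.matVec3 (hasDerivAt_const t s)
  convert h using 1
  rw [matVec_hatT]
  simp [matVec, Matrix.mulVec_zero]

end Helpers


/-- the Lyapunov-like function 𝒰 is non-increasing along closed-loop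
trajectories, with 𝒰̇ = −k_{Ω₁}‖e_{Ω₁}‖² − k_{Ω₂}‖e_{Ω₂}‖². -/
theorem lyapunov_nonincreasing
    (s₁₂ s₁₃ s₂₁ s₂₃ : V3)
    (hs₁₂ : ‖s₁₂‖ = 1) (hs₁₃ : ‖s₁₃‖ = 1) (hs₂₁ : ‖s₂₁‖ = 1) (hs₂₃ : ‖s₂₃‖ = 1)
    (hopp : s₁₂ = -s₂₁)
    (s₁₂₃ s₂₁₃ : V3) (hs₁₂₃ : s₁₂₃ = cross3 s₁₂ s₁₃) (hs₂₁₃ : s₂₁₃ = cross3 s₂₁ s₂₃)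
    (h₁ : s₁₂₃ ≠ 0) (h₂ : s₂₁₃ ≠ 0)
    (hnormal : ‖s₂₁₃‖⁻¹ • s₂₁₃ = -(‖s₁₂₃‖⁻¹ • s₁₂₃))
    (Ω₁ Ω₂ Ω₁' Ω₂' Ωd₁ Ωd₂ Ωd₁' Ωd₂' : ℝ → V3)
    (hΩ₁ : ∀ t, HasDerivAt Ω₁ (Ω₁' t) t) (hΩ₂ : ∀ t, HasDerivAt Ω₂ (Ω₂' t) t)
    (hΩd₁ : ∀ t, HasDerivAt Ωd₁ (Ωd₁' t) t) (hΩd₂ : ∀ t, HasDerivAt Ωd₂ (Ωd₂' t) t)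
    (R₁ R₂ Qd₁₂ : ℝ → M3)
    (hR₁SO : ∀ t, SO3 (R₁ t)) (hR₂SO : ∀ t, SO3 (R₂ t)) (hQdSO : ∀ t, SO3 (Qd₁₂ t))
    (hR₁ : ∀ t, HasDerivAt R₁ (R₁ t * hat (Ω₁ t)) t)
    (hR₂ : ∀ t, HasDerivAt R₂ (R₂ t * hat (Ω₂ t)) t)
    (hQd : ∀ t, HasDerivAt Qd₁₂ (Qd₁₂ t * hat (Ωd₁ t) - hat (Ωd₂ t) * Qd₁₂ t) t)
    (Qd₂₁ : ℝ → M3) (hQd₂₁ : ∀ t, Qd₂₁ t = (Qd₁₂ t)ᵀ)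
    (b₁₂ b₁₃ b₂₁ b₂₃ b₁₂₃ b₂₁₃ : ℝ → V3)
    (hb₁₂ : ∀ t, b₁₂ t = matVec (R₁ t)ᵀ s₁₂) (hb₁₃ : ∀ t, b₁₃ t = matVec (R₁ t)ᵀ s₁₃)
    (hb₂₁ : ∀ t, b₂₁ t = matVec (R₂ t)ᵀ s₂₁) (hb₂₃ : ∀ t, b₂₃ t = matVec (R₂ t)ᵀ s₂₃)
    (hb₁₂₃ : ∀ t, b₁₂₃ t = cross3 (b₁₂ t) (b₁₃ t))
    (hb₂₁₃ : ∀ t, b₂₁₃ t = cross3 (b₂₁ t) (b₂₃ t))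
    (a₁₂ : ℝ → ℝ) (ha₁₂ : ∀ t, a₁₂ t = ‖b₂₁₃ t‖ * ‖b₁₂₃ t‖)
    (kα kβ : ℝ) (hkα : 0 < kα) (hkβ : 0 < kβ)
    (e₁₂ : ℝ → V3)
    (he₁₂ : ∀ t, e₁₂ t = kα • cross3 (matVec (Qd₂₁ t) (b₂₁ t)) (b₁₂ t)
        + (kβ / a₁₂ t) • cross3 (matVec (Qd₂₁ t) (b₂₁₃ t)) (b₁₂₃ t))
    (e₂₁ : ℝ → V3)
    (he₂₁ : ∀ t, e₂₁ t = kα • cross3 (matVec (Qd₁₂ t) (b₁₂ t)) (b₂₁ t)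
        + (kβ / a₁₂ t) • cross3 (matVec (Qd₁₂ t) (b₁₂₃ t)) (b₂₁₃ t))
    (Ψ : ℝ → ℝ)
    (hΨ : ∀ t, Ψ t = kα * (1 + dot3 (b₂₁ t) (matVec (Qd₁₂ t) (b₁₂ t)))
        + kβ * (1 + (a₁₂ t)⁻¹ * dot3 (b₂₁₃ t) (matVec (Qd₁₂ t) (b₁₂₃ t))))
    (J₁ J₂ : M3) (hJ₁sym : J₁.IsSymm) (hJ₁pos : J₁.PosDef)
    (hJ₂sym : J₂.IsSymm) (hJ₂pos : J₂.PosDef)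
    (kΩ₁ kΩ₂ : ℝ) (hkΩ₁ : 0 < kΩ₁) (hkΩ₂ : 0 < kΩ₂)
    (eΩ₁ eΩ₂ : ℝ → V3)
    (heΩ₁ : ∀ t, eΩ₁ t = Ω₁ t - Ωd₁ t) (heΩ₂ : ∀ t, eΩ₂ t = Ω₂ t - Ωd₂ t)
    (u₁ u₂ : ℝ → V3)
    (hu₁ : ∀ t, u₁ t = -e₁₂ t - kΩ₁ • eΩ₁ t
        + matVec (hat (Ωd₁ t)) (matVec J₁ (eΩ₁ t + Ωd₁ t)) + matVec J₁ (Ωd₁' t))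
    (hu₂ : ∀ t, u₂ t = -e₂₁ t - kΩ₂ • eΩ₂ t
        + matVec (hat (Ωd₂ t)) (matVec J₂ (eΩ₂ t + Ωd₂ t)) + matVec J₂ (Ωd₂' t))
    (hdyn₁ : ∀ t, matVec J₁ (Ω₁' t) + cross3 (Ω₁ t) (matVec J₁ (Ω₁ t)) = u₁ t)
    (hdyn₂ : ∀ t, matVec J₂ (Ω₂' t) + cross3 (Ω₂ t) (matVec J₂ (Ω₂ t)) = u₂ t)
    (𝒰 : ℝ → ℝ)
    (h𝒰 : ∀ t, 𝒰 t = (1 / 2) * dot3 (eΩ₁ t) (matVec J₁ (eΩ₁ t))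
        + (1 / 2) * dot3 (eΩ₂ t) (matVec J₂ (eΩ₂ t)) + Ψ t) :
    (∀ t, HasDerivAt 𝒰 (-(kΩ₁ * ‖eΩ₁ t‖ ^ 2) - kΩ₂ * ‖eΩ₂ t‖ ^ 2) t) ∧
      Antitone 𝒰 := by
  
  classical
  set A : ℝ := ‖s₂₁₃‖ * ‖s₁₂₃‖ with hA
  have haconst : ∀ s, a₁₂ s = A := by
    intro s
    rw [ha₁₂ s, hb₂₁₃ s, hb₂₁ s, hb₂₃ s, hb₁₂₃ s, hb₁₂ s, hb₁₃ s,
      cross3_SO3 _ (hR₂SO s), cross3_SO3 _ (hR₁SO s), ← hs₂₁₃, ← hs₁₂₃,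
      norm_matVec_SO3T _ (hR₂SO s), norm_matVec_SO3T _ (hR₁SO s)]
  have key : ∀ t, HasDerivAt 𝒰 (-(kΩ₁ * ‖eΩ₁ t‖ ^ 2) - kΩ₂ * ‖eΩ₂ t‖ ^ 2) t := by
    intro t
    -- derivatives of the direction measurements
    have hd12 : HasDerivAt b₁₂ (cross3 (b₁₂ t) (Ω₁ t)) t := by
      rw [show b₁₂ = fun τ => matVec (R₁ τ)ᵀ s₁₂ from funext hb₁₂]
      exact deriv_bvec (hR₁ t) s₁₂
    have hd13 : HasDerivAt b₁₃ (cross3 (b₁₃ t) (Ω₁ t)) t := by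
      rw [show b₁₃ = fun τ => matVec (R₁ τ)ᵀ s₁₃ from funext hb₁₃]
      exact deriv_bvec (hR₁ t) s₁₃
    have hd21 : HasDerivAt b₂₁ (cross3 (b₂₁ t) (Ω₂ t)) t := by
      rw [show b₂₁ = fun τ => matVec (R₂ τ)ᵀ s₂₁ from funext hb₂₁]
      exact deriv_bvec (hR₂ t) s₂₁
    have hd23 : HasDerivAt b₂₃ (cross3 (b₂₃ t) (Ω₂ t)) t := by
      rw [show b₂₃ = fun τ => matVec (R₂ τ)ᵀ s₂₃ from funext hb₂₃]
      exact deriv_bvec (hR₂ t) s₂₃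
    have hd123 : HasDerivAt b₁₂₃ (cross3 (b₁₂₃ t) (Ω₁ t)) t := by
      rw [hb₁₂₃ t, show b₁₂₃ = fun τ => cross3 (b₁₂ τ) (b₁₃ τ) from funext hb₁₂₃]
      have h := hd12.cross3d hd13
      convert h using 1
      exact (cross_deriv_id (b₁₂ t) (b₁₃ t) (Ω₁ t)).symm
    have hd213 : HasDerivAt b₂₁₃ (cross3 (b₂₁₃ t) (Ω₂ t)) t := by
      rw [hb₂₁₃ t, show b₂₁₃ = fun τ => cross3 (b₂₁ τ) (b₂₃ τ) from funext hb₂₁₃]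
      have h := hd21.cross3d hd23
      convert h using 1
      exact (cross_deriv_id (b₂₁ t) (b₂₃ t) (Ω₂ t)).symm
    have hde1 : HasDerivAt eΩ₁ (Ω₁' t - Ωd₁' t) t := by
      rw [show eΩ₁ = fun s => Ω₁ s - Ωd₁ s from funext heΩ₁]
      exact (hΩ₁ t).sub (hΩd₁ t)
    have hde2 : HasDerivAt eΩ₂ (Ω₂' t - Ωd₂' t) t := by
      rw [show eΩ₂ = fun s => Ω₂ s - Ωd₂ s from funext heΩ₂]
      exact (hΩ₂ t).sub (hΩd₂ t)
    -- Ψ derivative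
    have i1 : HasDerivAt (fun s => dot3 (b₂₁ s) (matVec (Qd₁₂ s) (b₁₂ s)))
        (dot3 (cross3 (b₂₁ t) (Ω₂ t)) (matVec (Qd₁₂ t) (b₁₂ t))
          + dot3 (b₂₁ t) (matVec (Qd₁₂ t * hat (Ωd₁ t) - hat (Ωd₂ t) * Qd₁₂ t) (b₁₂ t)
            + matVec (Qd₁₂ t) (cross3 (b₁₂ t) (Ω₁ t)))) t :=
      hd21.dot3d ((hQd t).matVec3 hd12)
    have i2 : HasDerivAt (fun s => dot3 (b₂₁₃ s) (matVec (Qd₁₂ s) (b₁₂₃ s)))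
        (dot3 (cross3 (b₂₁₃ t) (Ω₂ t)) (matVec (Qd₁₂ t) (b₁₂₃ t))
          + dot3 (b₂₁₃ t) (matVec (Qd₁₂ t * hat (Ωd₁ t) - hat (Ωd₂ t) * Qd₁₂ t) (b₁₂₃ t)
            + matVec (Qd₁₂ t) (cross3 (b₁₂₃ t) (Ω₁ t)))) t :=
      hd213.dot3d ((hQd t).matVec3 hd123)
    have hΨfun : Ψ = fun s => kα * (1 + dot3 (b₂₁ s) (matVec (Qd₁₂ s) (b₁₂ s)))
        + kβ * (1 + A⁻¹ * dot3 (b₂₁₃ s) (matVec (Qd₁₂ s) (b₁₂₃ s))) :=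
      funext fun s => by rw [hΨ s, haconst s]
    have hdΨ : HasDerivAt Ψ
        (kα * (0 + (dot3 (cross3 (b₂₁ t) (Ω₂ t)) (matVec (Qd₁₂ t) (b₁₂ t))
          + dot3 (b₂₁ t) (matVec (Qd₁₂ t * hat (Ωd₁ t) - hat (Ωd₂ t) * Qd₁₂ t) (b₁₂ t)
            + matVec (Qd₁₂ t) (cross3 (b₁₂ t) (Ω₁ t)))))
        + kβ * (0 + A⁻¹ * (dot3 (cross3 (b₂₁₃ t) (Ω₂ t)) (matVec (Qd₁₂ t) (b₁₂₃ t))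
          + dot3 (b₂₁₃ t) (matVec (Qd₁₂ t * hat (Ωd₁ t) - hat (Ωd₂ t) * Qd₁₂ t) (b₁₂₃ t)
            + matVec (Qd₁₂ t) (cross3 (b₁₂₃ t) (Ω₁ t)))))) t := by
      rw [hΨfun]
      exact (((hasDerivAt_const t (1 : ℝ)).add i1).const_mul kα).add
        (((hasDerivAt_const t (1 : ℝ)).add (i2.const_mul A⁻¹)).const_mul kβ)
    -- kinetic derivatives
    have hK1 : HasDerivAt (fun s => (1 / 2) * dot3 (eΩ₁ s) (matVec J₁ (eΩ₁ s)))
        ((1 / 2) * (dot3 (Ω₁' t - Ωd₁' t) (matVec J₁ (eΩ₁ t))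
          + dot3 (eΩ₁ t) (matVec 0 (eΩ₁ t) + matVec J₁ (Ω₁' t - Ωd₁' t)))) t :=
      (hde1.dot3d ((hasDerivAt_const t J₁).matVec3 hde1)).const_mul (1 / 2)
    have hK2 : HasDerivAt (fun s => (1 / 2) * dot3 (eΩ₂ s) (matVec J₂ (eΩ₂ s)))
        ((1 / 2) * (dot3 (Ω₂' t - Ωd₂' t) (matVec J₂ (eΩ₂ t))
          + dot3 (eΩ₂ t) (matVec 0 (eΩ₂ t) + matVec J₂ (Ω₂' t - Ωd₂' t)))) t :=
      (hde2.dot3d ((hasDerivAt_const t J₂).matVec3 hde2)).const_mul (1 / 2)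
    have hU : HasDerivAt 𝒰
        (((1 / 2) * (dot3 (Ω₁' t - Ωd₁' t) (matVec J₁ (eΩ₁ t))
          + dot3 (eΩ₁ t) (matVec 0 (eΩ₁ t) + matVec J₁ (Ω₁' t - Ωd₁' t)))
        + (1 / 2) * (dot3 (Ω₂' t - Ωd₂' t) (matVec J₂ (eΩ₂ t))
          + dot3 (eΩ₂ t) (matVec 0 (eΩ₂ t) + matVec J₂ (Ω₂' t - Ωd₂' t))))
        + (kα * (0 + (dot3 (cross3 (b₂₁ t) (Ω₂ t)) (matVec (Qd₁₂ t) (b₁₂ t))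
          + dot3 (b₂₁ t) (matVec (Qd₁₂ t * hat (Ωd₁ t) - hat (Ωd₂ t) * Qd₁₂ t) (b₁₂ t)
            + matVec (Qd₁₂ t) (cross3 (b₁₂ t) (Ω₁ t)))))
        + kβ * (0 + A⁻¹ * (dot3 (cross3 (b₂₁₃ t) (Ω₂ t)) (matVec (Qd₁₂ t) (b₁₂₃ t))
          + dot3 (b₂₁₃ t) (matVec (Qd₁₂ t * hat (Ωd₁ t) - hat (Ωd₂ t) * Qd₁₂ t) (b₁₂₃ t)
            + matVec (Qd₁₂ t) (cross3 (b₁₂₃ t) (Ω₁ t))))))) t := by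
      rw [show 𝒰 = fun s => (1 / 2) * dot3 (eΩ₁ s) (matVec J₁ (eΩ₁ s))
        + (1 / 2) * dot3 (eΩ₂ s) (matVec J₂ (eΩ₂ s)) + Ψ s from funext h𝒰]
      exact (hK1.add hK2).add hdΨ
    -- now identify the derivative value
    have hJd1 : matVec J₁ (Ω₁' t - Ωd₁' t)
        = u₁ t - cross3 (Ω₁ t) (matVec J₁ (Ω₁ t)) - matVec J₁ (Ωd₁' t) := by
      rw [matVec_sub, eq_sub_of_add_eq (hdyn₁ t)]
    have hJd2 : matVec J₂ (Ω₂' t - Ωd₂' t)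
        = u₂ t - cross3 (Ω₂ t) (matVec J₂ (Ω₂ t)) - matVec J₂ (Ωd₂' t) := by
      rw [matVec_sub, eq_sub_of_add_eq (hdyn₂ t)]
    have kinetic1 : dot3 (eΩ₁ t) (matVec J₁ (Ω₁' t - Ωd₁' t))
        = -dot3 (eΩ₁ t) (e₁₂ t) - kΩ₁ * dot3 (eΩ₁ t) (eΩ₁ t) := by
      rw [hJd1, hu₁ t, heΩ₁ t]
      exact kin_id (Ω₁ t) (Ωd₁ t) (Ωd₁' t) (e₁₂ t) J₁ kΩ₁
    have kinetic2 : dot3 (eΩ₂ t) (matVec J₂ (Ω₂' t - Ωd₂' t))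
        = -dot3 (eΩ₂ t) (e₂₁ t) - kΩ₂ * dot3 (eΩ₂ t) (eΩ₂ t) := by
      rw [hJd2, hu₂ t, heΩ₂ t]
      exact kin_id (Ω₂ t) (Ωd₂ t) (Ωd₂' t) (e₂₁ t) J₂ kΩ₂
    have s1 : dot3 (Ω₁' t - Ωd₁' t) (matVec J₁ (eΩ₁ t))
        = dot3 (eΩ₁ t) (matVec J₁ (Ω₁' t - Ωd₁' t)) := symJ J₁ hJ₁sym _ _
    have s2 : dot3 (Ω₂' t - Ωd₂' t) (matVec J₂ (eΩ₂ t))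
        = dot3 (eΩ₂ t) (matVec J₂ (Ω₂' t - Ωd₂' t)) := symJ J₂ hJ₂sym _ _
    have z1 : matVec (0 : M3) (eΩ₁ t) = 0 := by simp [matVec]
    have z2 : matVec (0 : M3) (eΩ₂ t) = 0 := by simp [matVec]
    have eΨ : kα * (0 + (dot3 (cross3 (b₂₁ t) (Ω₂ t)) (matVec (Qd₁₂ t) (b₁₂ t))
          + dot3 (b₂₁ t) (matVec (Qd₁₂ t * hat (Ωd₁ t) - hat (Ωd₂ t) * Qd₁₂ t) (b₁₂ t)
            + matVec (Qd₁₂ t) (cross3 (b₁₂ t) (Ω₁ t)))))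
        + kβ * (0 + A⁻¹ * (dot3 (cross3 (b₂₁₃ t) (Ω₂ t)) (matVec (Qd₁₂ t) (b₁₂₃ t))
          + dot3 (b₂₁₃ t) (matVec (Qd₁₂ t * hat (Ωd₁ t) - hat (Ωd₂ t) * Qd₁₂ t) (b₁₂₃ t)
            + matVec (Qd₁₂ t) (cross3 (b₁₂₃ t) (Ω₁ t)))))
        = dot3 (eΩ₁ t) (e₁₂ t) + dot3 (eΩ₂ t) (e₂₁ t) := by
      rw [he₁₂ t, he₂₁ t, hQd₂₁ t, haconst t, heΩ₁ t, heΩ₂ t, div_eq_mul_inv]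
      exact psi_id (b₁₂ t) (b₂₁ t) (b₁₂₃ t) (b₂₁₃ t) (Qd₁₂ t)
        (Ω₁ t) (Ω₂ t) (Ωd₁ t) (Ωd₂ t) kα kβ A⁻¹
    have hval : ((1 / 2) * (dot3 (Ω₁' t - Ωd₁' t) (matVec J₁ (eΩ₁ t))
          + dot3 (eΩ₁ t) (matVec 0 (eΩ₁ t) + matVec J₁ (Ω₁' t - Ωd₁' t)))
        + (1 / 2) * (dot3 (Ω₂' t - Ωd₂' t) (matVec J₂ (eΩ₂ t))
          + dot3 (eΩ₂ t) (matVec 0 (eΩ₂ t) + matVec J₂ (Ω₂' t - Ωd₂' t))))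
        + (kα * (0 + (dot3 (cross3 (b₂₁ t) (Ω₂ t)) (matVec (Qd₁₂ t) (b₁₂ t))
          + dot3 (b₂₁ t) (matVec (Qd₁₂ t * hat (Ωd₁ t) - hat (Ωd₂ t) * Qd₁₂ t) (b₁₂ t)
            + matVec (Qd₁₂ t) (cross3 (b₁₂ t) (Ω₁ t)))))
        + kβ * (0 + A⁻¹ * (dot3 (cross3 (b₂₁₃ t) (Ω₂ t)) (matVec (Qd₁₂ t) (b₁₂₃ t))
          + dot3 (b₂₁₃ t) (matVec (Qd₁₂ t * hat (Ωd₁ t) - hat (Ωd₂ t) * Qd₁₂ t) (b₁₂₃ t)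
            + matVec (Qd₁₂ t) (cross3 (b₁₂₃ t) (Ω₁ t))))))
        = -(kΩ₁ * ‖eΩ₁ t‖ ^ 2) - kΩ₂ * ‖eΩ₂ t‖ ^ 2 := by
      rw [z1, z2, s1, s2, eΨ]
      simp only [zero_add]
      rw [kinetic1, kinetic2, dot3_self_norm, dot3_self_norm]
      ring
    exact hval ▸ hU
  refine ⟨key, ?_⟩
  apply antitone_of_deriv_nonpos (fun x => (key x).differentiableAt)
  intro x
  rw [(key x).deriv]
  have h1 : 0 ≤ kΩ₁ * ‖eΩ₁ x‖ ^ 2 := mul_nonneg hkΩ₁.le (by positivity)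
  have h2 : 0 ≤ kΩ₂ * ‖eΩ₂ x‖ ^ 2 := mul_nonneg hkΩ₂.le (by positivity)
  linarith
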